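/- Let G be a finite tree, let p ≥ 2 and d ≥ 1 be integers, and let H be a finite family of nonempty subsets of the vertex set of G, each inducing a subgraph of G with at most d connected components, with |H| ≥ p. If H satisfies the (p,p) property, then the covering number satisfies τ(H) < p^{1/(p-1)} · d^{p/(p-1)} + d. -/

import Mathlib

/-- A finite family `H` of vertex sets satisfies the `(p,q)` property if among
every `p` distinct members of `H` some `q` have a vertex in common. -/
def VertexPQProperty {V : Type*} (H : Finset (Set V)) (p q : ℕ) : Prop :=
  ∀ S ⊆ H, S.card = p → ∃ T ⊆ S, T.card = q ∧ (⋂ h ∈ T, (h : Set V)).Nonempty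

/-- The covering number `τ(H)`: the minimum cardinality of a set of vertices
meeting every member of `H`. -/
noncomputable def vertexCoverNum {V : Type*} (H : Finset (Set V)) : ℕ :=
  sInf { n : ℕ | ∃ C : Finset V, C.card = n ∧ ∀ h ∈ H, ∃ v ∈ C, v ∈ h }

/-- The fractional covering number `τ*(H)`: the infimum of total weights of
fractional covers of `H`. -/
noncomputable def vertexFracCoverNum {V : Type*} [Fintype V] (H : Finset (Set V)) : ℝ :=
  sInf { t : ℝ | ∃ w : V → ℝ, (∀ v, 0 ≤ w v) ∧
    (∀ h ∈ H, 1 ≤ ∑ v, Set.indicator h w v) ∧ t = ∑ v, w v }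

namespace TreeCover

open SimpleGraph Finset

attribute [local instance] Classical.propDecidable

variable {V : Type*} {G : SimpleGraph V}

/-- The unique path between two vertices of a tree. -/
noncomputable def upath (hG : G.IsTree) (x y : V) : G.Walk x y :=
  ((isTree_iff_existsUnique_path.mp hG).2 x y).choose

lemma upath_isPath (hG : G.IsTree) (x y : V) : (upath hG x y).IsPath :=
  ((isTree_iff_existsUnique_path.mp hG).2 x y).choose_spec.1

lemma upath_unique (hG : G.IsTree) {x y : V} (q : G.Walk x y) (hq : q.IsPath) :
    q = upath hG x y :=
  ((isTree_iff_existsUnique_path.mp hG).2 x y).choose_spec.2 q hq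

/-- The unique path is inside the support of every walk with the same endpoints. -/
lemma upath_support_subset (hG : G.IsTree) {x y : V} (w : G.Walk x y) :
    (upath hG x y).support ⊆ w.support := by
  rw [← upath_unique hG w.bypass w.bypass_isPath]
  exact w.support_bypass_subset

lemma upath_take (hG : G.IsTree) {x y z : V} (hz : z ∈ (upath hG x y).support) :
    upath hG x z = (upath hG x y).takeUntil z hz :=
  (upath_unique hG _ ((upath_isPath hG x y).takeUntil hz)).symm

lemma upath_drop (hG : G.IsTree) {x y z : V} (hz : z ∈ (upath hG x y).support) :
    upath hG z y = (upath hG x y).dropUntil z hz :=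
  (upath_unique hG _ ((upath_isPath hG x y).dropUntil hz)).symm

/-- Depth of a vertex relative to a root. -/
noncomputable def depth (hG : G.IsTree) (r x : V) : ℕ := (upath hG r x).length

lemma depth_le_of_mem (hG : G.IsTree) {r x z : V} (hz : z ∈ (upath hG r x).support) :
    depth hG r z ≤ depth hG r x := by
  rw [depth, upath_take hG hz]
  exact Walk.length_takeUntil_le _ hz

lemma depth_lt_of_mem (hG : G.IsTree) {r x z : V} (hz : z ∈ (upath hG r x).support)
    (hne : z ≠ x) : depth hG r z < depth hG r x := by
  have hspec := (upath hG r x).take_spec hz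
  have hlen : ((upath hG r x).takeUntil z hz).length
      + ((upath hG r x).dropUntil z hz).length = (upath hG r x).length := by
    rw [← Walk.length_append, hspec]
  have hdrop : ((upath hG r x).dropUntil z hz).length ≠ 0 := by
    intro h0
    exact hne (Walk.eq_of_length_eq_zero h0)
  rw [depth, depth, upath_take hG hz]
  omega

lemma eq_of_mem_depth_le (hG : G.IsTree) {r x z : V} (hz : z ∈ (upath hG r x).support)
    (hle : depth hG r x ≤ depth hG r z) : z = x := by
  by_contra hne
  exact absurd hle (not_le.mpr (depth_lt_of_mem hG hz hne))

/-- A set is path-closed if it contains the unique path between any two of its members. -/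
def PathClosed (hG : G.IsTree) (S : Set V) : Prop :=
  ∀ x ∈ S, ∀ y ∈ S, ∀ z ∈ (upath hG x y).support, z ∈ S

/-- Common "ancestors": a vertex outside a path-closed set that lies on the unique
path from `r` to one member lies on the path from `r` to every member. -/
lemma anc (hG : G.IsTree) {S : Set V} (hPC : PathClosed hG S) {r x y z : V}
    (hx : x ∈ S) (hy : y ∈ S) (hzx : z ∈ (upath hG r x).support) (hzS : z ∉ S) :
    z ∈ (upath hG r y).support := by
  have hpp : ∀ a ∈ (upath hG y x).support, a ∈ S := fun a ha => hPC y hy x hx a ha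
  have hW : z ∈ ((upath hG r y).append (upath hG y x)).support :=
    upath_support_subset hG _ hzx
  rw [Walk.mem_support_append_iff] at hW
  rcases hW with h | h
  · exact h
  · exact absurd (hpp z h) hzS

/-- Existence of a gate: a vertex of a path-closed set through which all paths
from the root into the set pass. -/
lemma exists_gate (hG : G.IsTree) {S : Set V} (hS : S.Nonempty) (hPC : PathClosed hG S)
    (r : V) : ∃ u ∈ S, ∀ y ∈ S, u ∈ (upath hG r y).support := by
  obtain ⟨x₀, hx₀⟩ := hS
  set T : Finset V := (upath hG r x₀).support.toFinset.filter (· ∈ S) with hT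
  have hTne : T.Nonempty := by
    refine ⟨x₀, ?_⟩
    simp [hT, Walk.end_mem_support, hx₀]
  obtain ⟨u, huT, humin⟩ := T.exists_min_image (depth hG r) hTne
  have huS : u ∈ S := (Finset.mem_filter.mp huT).2
  have hux₀ : u ∈ (upath hG r x₀).support := by
    have := (Finset.mem_filter.mp huT).1
    simpa using this
  refine ⟨u, huS, ?_⟩
  intro y hy
  by_cases hur : u = r
  · subst hur
    exact Walk.start_mem_support _
  · -- decompose the path from r to u at its penultimate vertex z
    have hq : ¬ (upath hG r u).reverse.Nil := by
      rw [Walk.nil_iff_length_eq]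
      rw [Walk.length_reverse]
      intro h0
      exact hur (Walk.eq_of_length_eq_zero h0).symm
    rw [Walk.not_nil_iff] at hq
    obtain ⟨z, hadj, w2, hq⟩ := hq
    have hw2path : w2.IsPath := by
      have : (upath hG r u).reverse.IsPath := (upath_isPath hG r u).reverse
      rw [hq] at this
      exact this.of_cons
    have hupz : upath hG r z = w2.reverse := (upath_unique hG w2.reverse hw2path.reverse).symm
    have hzq : z ∈ (upath hG r u).support := by
      have : z ∈ (upath hG r u).reverse.support := by
        rw [hq, Walk.support_cons]
        exact List.mem_cons_of_mem _ (Walk.start_mem_support w2)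
      rwa [Walk.support_reverse, List.mem_reverse] at this
    have hzdepth : depth hG r z < depth hG r u := by
      have h1 : depth hG r z = w2.length := by
        rw [depth, hupz, Walk.length_reverse]
      have h2 : depth hG r u = w2.length + 1 := by
        have := congrArg Walk.length hq
        rw [Walk.length_reverse, Walk.length_cons] at this
        rw [depth, this]
      omega
    have hzx₀ : z ∈ (upath hG r x₀).support := by
      have : z ∈ ((upath hG r x₀).takeUntil u hux₀).support := by
        rw [← upath_take hG hux₀]
        exact hzq
      exact (upath hG r x₀).support_takeUntil_subset hux₀ this
    have hzS : z ∉ S := by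
      intro hzS
      have : z ∈ T := by
        simp only [hT, Finset.mem_filter, List.mem_toFinset]
        exact ⟨hzx₀, hzS⟩
      exact absurd (humin z this) (not_le.mpr hzdepth)
    -- z lies on the path from r to y
    have hzy : z ∈ (upath hG r y).support := anc hG hPC huS hy hzq hzS
    -- the path from z to y starts with the edge z-u
    have hcons : (Walk.cons hadj.symm (upath hG u y)).IsPath := by
      rw [Walk.cons_isPath_iff]
      refine ⟨upath_isPath hG u y, fun hmem => hzS (hPC u huS y hy z hmem)⟩
    have hzy2 : upath hG z y = Walk.cons hadj.symm (upath hG u y) :=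
      (upath_unique hG _ hcons).symm
    have humem : u ∈ (upath hG z y).support := by
      rw [hzy2, Walk.support_cons]
      exact List.mem_cons_of_mem _ (Walk.start_mem_support _)
    -- and this path is a suffix of the path from r to y
    have : u ∈ ((upath hG r y).dropUntil z hzy).support := by
      rw [← upath_drop hG hzy]
      exact humem
    have hspec := (upath hG r y).take_spec hzy
    rw [← hspec, Walk.mem_support_append_iff]
    exact Or.inr this

/-- A canonical gate. -/
noncomputable def gate (hG : G.IsTree) (r : V) (S : Set V) : V :=
  if h : S.Nonempty ∧ PathClosed hG S then (exists_gate hG h.1 h.2 r).choose else r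

lemma gate_spec (hG : G.IsTree) (r : V) {S : Set V} (hS : S.Nonempty)
    (hPC : PathClosed hG S) :
    gate hG r S ∈ S ∧ ∀ y ∈ S, gate hG r S ∈ (upath hG r y).support := by
  rw [gate, dif_pos ⟨hS, hPC⟩]
  exact ⟨(exists_gate hG hS hPC r).choose_spec.1, (exists_gate hG hS hPC r).choose_spec.2⟩

/-- On the path from `r` to `v`, a deeper vertex lies on the path from a
shallower one to `v`. -/
lemma mem_suffix (hG : G.IsTree) {r v a b : V} (ha : a ∈ (upath hG r v).support)
    (hb : b ∈ (upath hG r v).support) (hd : depth hG r b ≤ depth hG r a) :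
    a ∈ (upath hG b v).support := by
  have hspec := (upath hG r v).take_spec hb
  rw [← hspec, Walk.mem_support_append_iff] at ha
  rcases ha with h | h
  · rw [← upath_take hG hb] at h
    have : a = b := eq_of_mem_depth_le hG h hd
    subst this
    exact Walk.start_mem_support _
  · rw [← upath_drop hG hb] at h
    exact h

end TreeCover
namespace TreeCover

variable {ι : Type*} [Fintype ι]

/-- dot product on `ι → ℝ`. -/
def dot (u v : ι → ℝ) : ℝ := ∑ i, u i * v i

lemma dot_sub (u w v : ι → ℝ) : dot (u - w) v = dot u v - dot w v := by
  simp [dot, sub_mul, Finset.sum_sub_distrib]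

lemma dot_smul (c : ℝ) (u v : ι → ℝ) : dot (c • u) v = c * dot u v := by
  simp [dot, Finset.mul_sum, mul_assoc]

lemma dot_self_pos {b : ι → ℝ} (hb : b ≠ 0) : 0 < dot b b := by
  have : ∃ i, b i ≠ 0 := by
    by_contra h
    push_neg at h
    exact hb (funext h)
  obtain ⟨i, hi⟩ := this
  exact Finset.sum_pos' (fun j _ => mul_self_nonneg _)
    ⟨i, Finset.mem_univ i, mul_self_pos.2 hi⟩

/-- Farkas' lemma, by induction on the number of generators. -/
theorem farkas (m : ℕ) (a : Fin m → ι → ℝ) (b : ι → ℝ) :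
    (∃ lam : Fin m → ℝ, (∀ i, 0 ≤ lam i) ∧ b = ∑ i, lam i • a i) ∨
    (∃ y : ι → ℝ, (∀ i, 0 ≤ dot (a i) y) ∧ dot b y < 0) := by
  induction m generalizing b with
  | zero =>
    by_cases hb : b = 0
    · exact Or.inl ⟨fun i => 0, fun i => le_rfl, by simp [hb]⟩
    · exact Or.inr ⟨-b, fun i => i.elim0, by
        have := dot_self_pos hb
        have h2 : dot b (-b) = -dot b b := by simp [dot, mul_comm]
        rw [h2]; linarith⟩
  | succ m ih =>
    rcases ih (fun i => a i.castSucc) b with ⟨lam, hlam, hb⟩ | ⟨y, hay, hby⟩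
    · refine Or.inl ⟨Fin.snoc lam 0, ?_, ?_⟩
      · intro i
        refine Fin.lastCases ?_ ?_ i <;> simp [Fin.snoc_castSucc, hlam]
      · rw [Fin.sum_univ_castSucc]
        simp [Fin.snoc_castSucc, hb]
    · by_cases hlast : 0 ≤ dot (a (Fin.last m)) y
      · refine Or.inr ⟨y, ?_, hby⟩
        intro i
        refine Fin.lastCases hlast (fun j => hay j) i
      · push_neg at hlast
        set aL := a (Fin.last m) with haL
        have hdal : dot aL y ≠ 0 := ne_of_lt hlast
        set c : Fin m → ℝ := fun i => dot (a i.castSucc) y / dot aL y with hc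
        set cb : ℝ := dot b y / dot aL y with hcb
        have hcnp : ∀ i, c i ≤ 0 := fun i =>
          div_nonpos_of_nonneg_of_nonpos (hay i) hlast.le
        have hcbpos : 0 < cb := div_pos_of_neg_of_neg hby hlast
        rcases ih (fun i => a i.castSucc - c i • aL) (b - cb • aL) with
          ⟨lam, hlam, hb'⟩ | ⟨y', hay', hby'⟩
        · -- b is in the cone
          refine Or.inl ⟨Fin.snoc lam (cb - ∑ i, lam i * c i), ?_, ?_⟩
          · intro i
            refine Fin.lastCases ?_ ?_ i
            · simp only [Fin.snoc_last]
              have : ∑ i, lam i * c i ≤ 0 :=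
                Finset.sum_nonpos fun i _ => mul_nonpos_iff.2 (Or.inl ⟨hlam i, hcnp i⟩)
              linarith
            · intro j; simpa [Fin.snoc_castSucc] using hlam j
          · rw [Fin.sum_univ_castSucc]
            simp only [Fin.snoc_castSucc, Fin.snoc_last]
            have hexp : b = ∑ i, lam i • (a i.castSucc - c i • aL) + cb • aL := by
              rw [← hb']; abel
            rw [hexp]
            simp only [smul_sub, smul_smul, Finset.sum_sub_distrib, sub_smul,
              Finset.sum_smul]
            abel
        · -- separating hyperplane
          set s : ℝ := dot aL y' / dot aL y with hs
          have key : ∀ u : ι → ℝ, dot u (y' - s • y) = dot u y' - s * dot u y := by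
            intro u
            simp [dot, mul_sub, Finset.sum_sub_distrib, Finset.mul_sum]
            ring_nf
            simp [Finset.sum_comm, mul_comm, mul_left_comm, mul_assoc]
          refine Or.inr ⟨y' - s • y, ?_, ?_⟩
          · intro i
            refine Fin.lastCases ?_ ?_ i
            · rw [key, hs]
              field_simp
              rw [← haL, sub_self, zero_div]
            · intro j
              have h1 := hay' j
              have h2 : dot (a j.castSucc - c j • aL) y' =
                  dot (a j.castSucc) y' - c j * dot aL y' := by
                rw [dot_sub, dot_smul]
              rw [h2] at h1
              rw [key]
              have h3 : s * dot (a j.castSucc) y = c j * dot aL y' := by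
                rw [hs, hc]
                field_simp
              linarith
          · have h2 : dot (b - cb • aL) y' = dot b y' - cb * dot aL y' := by
              rw [dot_sub, dot_smul]
            rw [h2] at hby'
            rw [key]
            have h3 : s * dot b y = cb * dot aL y' := by
              rw [hs, hcb]
              field_simp
            linarith

end TreeCover
namespace TreeCover
open SimpleGraph Finset
attribute [local instance] Classical.propDecidable

variable {V : Type*} [Fintype V] {G : SimpleGraph V}

/-- Greedy construction: a small set of vertices hitting all path-closed sets of
large weight. -/
lemma greedy (hG : G.IsTree) (r : V) (d : ℕ) (hd : 1 ≤ d) :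
    ∀ (n : ℕ) (w : V → ℝ), (Finset.univ.filter (fun v => w v ≠ 0)).card ≤ n →
    (∀ v, 0 ≤ w v) →
    ∃ C : Finset V, (C.card : ℝ) ≤ d * ∑ v, w v ∧
      ∀ S : Set V, S.Nonempty → PathClosed hG S →
        (1:ℝ)/d ≤ ∑ v ∈ Finset.univ.filter (· ∈ S), w v → ∃ c ∈ C, c ∈ S := by
  have hdpos : (0:ℝ) < d := by positivity
  intro n
  induction n with
  | zero =>
    intro w hsupp hw0
    refine ⟨∅, by simpa using mul_nonneg hdpos.le (Finset.sum_nonneg fun v _ => hw0 v), ?_⟩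
    intro S hSne hPC hwS
    exfalso
    have hw : ∀ v, w v = 0 := by
      intro v
      by_contra hv
      have : v ∈ Finset.univ.filter (fun v => w v ≠ 0) := by simp [hv]
      have := Finset.card_pos.mpr ⟨v, this⟩
      omega
    have : ∑ v ∈ Finset.univ.filter (· ∈ S), w v = 0 :=
      Finset.sum_eq_zero fun v _ => hw v
    rw [this] at hwS
    have : (0:ℝ) < 1/d := by positivity
    linarith
  | succ n ih =>
    intro w hsupp hw0
    set subF : V → Finset V := fun v => Finset.univ.filter
      (fun x => v ∈ (upath hG r x).support) with hsubF
    set cand : Finset V := Finset.univ.filter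
      (fun v => (1:ℝ)/d ≤ ∑ x ∈ subF v, w x) with hcand
    by_cases hc : cand.Nonempty
    · obtain ⟨vm, hvm, hvmax⟩ := cand.exists_max_image (depth hG r) hc
      have hvm' : (1:ℝ)/d ≤ ∑ x ∈ subF vm, w x := by
        have := Finset.mem_filter.mp hvm
        exact this.2
      set w' : V → ℝ := fun x => if x ∈ subF vm then 0 else w x with hw'
      have hw'0 : ∀ v, 0 ≤ w' v := by
        intro v
        by_cases h : v ∈ subF vm <;> simp [hw', h, hw0 v]
      have hsum' : ∑ v, w' v = ∑ v, w v - ∑ x ∈ subF vm, w x := by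
        rw [← Finset.sum_filter_add_sum_filter_not Finset.univ (· ∈ subF vm) w']
        have h1 : ∑ v ∈ Finset.univ.filter (· ∈ subF vm), w' v = 0 :=
          Finset.sum_eq_zero fun v hv => by
            simp only [Finset.mem_filter] at hv
            simp [hw', hv.2]
        have h2 : ∑ v ∈ Finset.univ.filter (¬ · ∈ subF vm), w' v
            = ∑ v ∈ Finset.univ.filter (¬ · ∈ subF vm), w v :=
          Finset.sum_congr rfl fun v hv => by
            simp only [Finset.mem_filter] at hv
            simp [hw', hv.2]
        have h3 : ∑ x ∈ subF vm, w x = ∑ v ∈ Finset.univ.filter (· ∈ subF vm), w v := by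
          apply Finset.sum_congr _ (fun _ _ => rfl)
          ext x
          simp
        have h4 := Finset.sum_filter_add_sum_filter_not Finset.univ (· ∈ subF vm) w
        rw [h1, h2, h3]
        linarith
    -- the support of w' is strictly smaller
      obtain ⟨v₀, hv₀sub, hv₀ne⟩ : ∃ v₀ ∈ subF vm, w v₀ ≠ 0 := by
        by_contra hno
        push_neg at hno
        have : ∑ x ∈ subF vm, w x = 0 := Finset.sum_eq_zero hno
        rw [this] at hvm'
        have : (0:ℝ) < 1/d := by positivity
        linarith
      have hsupp' : (Finset.univ.filter (fun v => w' v ≠ 0)).card ≤ n := by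
        have hsub : Finset.univ.filter (fun v => w' v ≠ 0)
            ⊆ (Finset.univ.filter (fun v => w v ≠ 0)).erase v₀ := by
          intro x hx
          simp only [Finset.mem_filter, Finset.mem_univ, true_and] at hx
          rw [Finset.mem_erase]
          constructor
          · rintro rfl
            simp [hw', hv₀sub] at hx
          · simp only [Finset.mem_filter, Finset.mem_univ, true_and]
            intro hwx
            apply hx
            by_cases h : x ∈ subF vm <;> simp [hw', h, hwx]
        have h1 := Finset.card_le_card hsub
        have h2 : v₀ ∈ Finset.univ.filter (fun v => w v ≠ 0) := by simp [hv₀ne]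
        have h3 := Finset.card_erase_of_mem h2
        omega
      obtain ⟨C', hC'card, hC'cov⟩ := ih w' hsupp' hw'0
      refine ⟨insert vm C', ?_, ?_⟩
      · have h1 : ((insert vm C').card : ℝ) ≤ C'.card + 1 := by
          have := Finset.card_insert_le vm C'
          exact_mod_cast this
        have h2 : (d:ℝ) * (1/d) ≤ d * ∑ x ∈ subF vm, w x :=
          mul_le_mul_of_nonneg_left hvm' (le_of_lt hdpos)
        rw [mul_one_div_cancel (ne_of_gt hdpos)] at h2
        have h3 : (d:ℝ) * ∑ v, w' v = d * ∑ v, w v - d * ∑ x ∈ subF vm, w x := by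
          rw [hsum']; ring
        linarith
      · intro S hSne hPC hwS
        by_cases hvS : vm ∈ S
        · exact ⟨vm, Finset.mem_insert_self _ _, hvS⟩
        by_cases hS' : (1:ℝ)/d ≤ ∑ v ∈ Finset.univ.filter (· ∈ S), w' v
        · obtain ⟨c, hc1, hc2⟩ := hC'cov S hSne hPC hS'
          exact ⟨c, Finset.mem_insert_of_mem hc1, hc2⟩
        · exfalso
          -- S intersects the subtree of vm, so S ⊆ subtree of vm
          obtain ⟨x, hxS, hxsub⟩ : ∃ x, x ∈ S ∧ x ∈ subF vm := by
            by_contra hno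
            push_neg at hno
            have : ∑ v ∈ Finset.univ.filter (· ∈ S), w' v
                = ∑ v ∈ Finset.univ.filter (· ∈ S), w v := by
              apply Finset.sum_congr rfl
              intro v hv
              simp only [Finset.mem_filter, Finset.mem_univ, true_and] at hv
              have : v ∉ subF vm := hno v hv
              simp [hw', this]
            rw [this] at hS'
            exact hS' hwS
          have hxsub' : vm ∈ (upath hG r x).support := by
            simpa [hsubF] using hxsub
          -- every y ∈ S has vm on its root path
          have hSsub : ∀ y ∈ S, vm ∈ (upath hG r y).support := by
            intro y hy
            exact anc hG hPC hxS hy hxsub' hvS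
          -- the gate of S is deeper than vm, and its subtree has large weight
          obtain ⟨hu_mem, hu_all⟩ := gate_spec hG r hSne hPC
          set u := gate hG r S
          have huvm : vm ∈ (upath hG r u).support := hSsub u hu_mem
          have hne : vm ≠ u := fun h => hvS (h ▸ hu_mem)
          have hdepth : depth hG r vm < depth hG r u :=
            depth_lt_of_mem hG huvm hne
          have hSsubF : Finset.univ.filter (· ∈ S) ⊆ subF u := by
            intro v hv
            simp only [hsubF, Finset.mem_filter, Finset.mem_univ, true_and] at hv ⊢
            exact hu_all v hv
          have hwu : (1:ℝ)/d ≤ ∑ x ∈ subF u, w x := by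
            refine le_trans hwS (Finset.sum_le_sum_of_subset_of_nonneg hSsubF ?_)
            intro v _ _
            exact hw0 v
          have hu_cand : u ∈ cand := by
            simp only [hcand, Finset.mem_filter, Finset.mem_univ, true_and]
            exact hwu
          exact absurd (hvmax u hu_cand) (not_le.mpr hdepth)
    · -- no candidate: no path-closed set has large weight
      refine ⟨∅, by simpa using mul_nonneg hdpos.le (Finset.sum_nonneg fun v _ => hw0 v), ?_⟩
      intro S hSne hPC hwS
      exfalso
      obtain ⟨hu_mem, hu_all⟩ := gate_spec hG r hSne hPC
      set u := gate hG r S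
      have hSsubF : Finset.univ.filter (· ∈ S) ⊆ subF u := by
        intro v hv
        simp only [hsubF, Finset.mem_filter, Finset.mem_univ, true_and] at hv ⊢
        exact hu_all v hv
      have hwu : (1:ℝ)/d ≤ ∑ x ∈ subF u, w x := by
        refine le_trans hwS (Finset.sum_le_sum_of_subset_of_nonneg hSsubF ?_)
        intro v _ _
        exact hw0 v
      exact hc ⟨u, by simp only [hcand, Finset.mem_filter, Finset.mem_univ, true_and]; exact hwu⟩

end TreeCover
namespace TreeCover
open SimpleGraph Finset
attribute [local instance] Classical.propDecidable

variable {V : Type*} [Fintype V]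

/-- The connected component of `v` inside the subgraph induced by `h`, as a set
of vertices. -/
def comp (G : SimpleGraph V) (h : Set V) (v : V) : Set V :=
  {y | ∃ (hy : y ∈ h) (hv : v ∈ h), (G.induce h).Reachable ⟨y, hy⟩ ⟨v, hv⟩}

lemma comp_subset {G : SimpleGraph V} {h : Set V} {v : V} : comp G h v ⊆ h :=
  fun _ hy => hy.1

lemma mem_comp_self {G : SimpleGraph V} {h : Set V} {v : V} (hv : v ∈ h) :
    v ∈ comp G h v := ⟨hv, hv, Reachable.refl _⟩

lemma reach_of_mem_comp {G : SimpleGraph V} {h : Set V} {v y : V}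
    (hy : y ∈ comp G h v) (hy' : y ∈ h) (hv' : v ∈ h) :
    (G.induce h).Reachable ⟨y, hy'⟩ ⟨v, hv'⟩ := by
  obtain ⟨hy2, hv2, hr⟩ := hy
  convert hr using 2

lemma comp_pathClosed {G : SimpleGraph V} (hG : G.IsTree) (h : Set V) (v : V) :
    PathClosed hG (comp G h v) := by
  intro x hx y hy z hz
  obtain ⟨hxh, hvh, hrx⟩ := hx
  obtain ⟨hyh, hvh2, hry⟩ := hy
  have hry' : (G.induce h).Reachable ⟨y, hyh⟩ ⟨v, hvh⟩ := by convert hry using 2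
  have hxy : (G.induce h).Reachable ⟨x, hxh⟩ ⟨y, hyh⟩ := hrx.trans hry'.symm
  refine hxy.elim fun W' => ?_
  have hmap : ∀ a : V, a ∈ ((W'.map (Embedding.induce h).toHom).support) →
      a ∈ comp G (h : Set V) v := by
    intro a ha
    rw [Walk.support_map, List.mem_map] at ha
    obtain ⟨a', ha', rfl⟩ := ha
    refine ⟨a'.2, hvh, ?_⟩
    have hr1 : (G.induce h).Reachable ⟨x, hxh⟩ a' := ⟨W'.takeUntil a' ha'⟩
    have : (G.induce h).Reachable (⟨(a' : V), a'.2⟩ : ↥h) ⟨v, hvh⟩ := by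
      have := (hr1.symm).trans hrx
      convert this using 2
    exact this
  have hzW : z ∈ (W'.map (Embedding.induce h).toHom).support :=
    upath_support_subset hG _ hz
  exact hmap z hzW

/-- Each member `h` (of total weight at least 1, with at most `d` components)
has a component of weight at least `1/d`. -/
lemma exists_heavy_comp {G : SimpleGraph V} (d : ℕ) (hd : 1 ≤ d) (h : Set V)
    (hcc : Nat.card (G.induce h).ConnectedComponent ≤ d) (w : V → ℝ)
    (hw0 : ∀ v, 0 ≤ w v)
    (hcov : 1 ≤ ∑ v ∈ Finset.univ.filter (· ∈ h), w v) :
    ∃ v ∈ h, (1:ℝ)/d ≤ ∑ x ∈ Finset.univ.filter (· ∈ comp G h v), w x := by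
  have hdpos : (0:ℝ) < d := by positivity
  haveI : Fintype ↥h := Fintype.ofFinite _
  haveI : Fintype (G.induce h).ConnectedComponent := Fintype.ofFinite _
  have key1 : ∑ v ∈ Finset.univ.filter (· ∈ h), w v = ∑ a : ↥h, w a.val := by
    rw [Finset.sum_subtype (Finset.univ.filter (· ∈ h))
      (by simp : ∀ x, x ∈ Finset.univ.filter (· ∈ h) ↔ x ∈ h) w]
  have key2 : ∑ a : ↥h, w a.val =
      ∑ c : (G.induce h).ConnectedComponent,
        ∑ a ∈ Finset.univ.filter
          (fun a : ↥h => (G.induce h).connectedComponentMk a = c), w a.val :=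
    (Finset.sum_fiberwise _ _ _).symm
  -- pigeonhole: some component fiber has weight ≥ 1/d
  obtain ⟨c, hc⟩ : ∃ c : (G.induce h).ConnectedComponent,
      (1:ℝ)/d ≤ ∑ a ∈ Finset.univ.filter
        (fun a : ↥h => (G.induce h).connectedComponentMk a = c), w a.val := by
    by_contra hno
    push_neg at hno
    have hne : (Finset.univ : Finset (G.induce h).ConnectedComponent).Nonempty := by
      have : ∃ v, v ∈ h := by
        by_contra hvn
        push_neg at hvn
        have : Finset.univ.filter (· ∈ h) = ∅ := by
          apply Finset.filter_eq_empty_iff.mpr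
          intro x _
          exact hvn x
        rw [this, Finset.sum_empty] at hcov
        linarith
      obtain ⟨v, hv⟩ := this
      exact ⟨(G.induce h).connectedComponentMk ⟨v, hv⟩, Finset.mem_univ _⟩
    have hlt := Finset.sum_lt_sum_of_nonempty hne
      (f := fun c => ∑ a ∈ Finset.univ.filter
        (fun a : ↥h => (G.induce h).connectedComponentMk a = c), w a.val)
      (g := fun _ => (1:ℝ)/d) (fun c _ => hno c)
    rw [Finset.sum_const, Finset.card_univ, nsmul_eq_mul] at hlt
    have hcard : (Fintype.card (G.induce h).ConnectedComponent : ℝ) ≤ d := by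
      rw [← Nat.card_eq_fintype_card]
      exact_mod_cast hcc
    have : (Fintype.card (G.induce h).ConnectedComponent : ℝ) * (1/d) ≤ d * (1/d) :=
      mul_le_mul_of_nonneg_right hcard (by positivity)
    rw [mul_one_div_cancel (ne_of_gt hdpos)] at this
    rw [key1, key2] at hcov
    linarith
  -- the fiber is nonempty; pick a representative
  obtain ⟨a₀, ha₀⟩ : ∃ a₀ : ↥h, (G.induce h).connectedComponentMk a₀ = c := by
    by_contra hno
    push_neg at hno
    have : Finset.univ.filter
        (fun a : ↥h => (G.induce h).connectedComponentMk a = c) = ∅ := by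
      apply Finset.filter_eq_empty_iff.mpr
      intro a _
      exact hno a
    rw [this, Finset.sum_empty] at hc
    have : (0:ℝ) < 1/d := by positivity
    linarith
  refine ⟨a₀.val, a₀.2, ?_⟩
  have hbij : ∑ x ∈ Finset.univ.filter (· ∈ comp G h a₀.val), w x
      = ∑ a ∈ Finset.univ.filter
          (fun a : ↥h => (G.induce h).connectedComponentMk a = c), w a.val := by
    refine (Finset.sum_bij (fun a _ => a.val) ?_ ?_ ?_ ?_).symm
    · intro a ha
      simp only [Finset.mem_filter, Finset.mem_univ, true_and] at ha ⊢
      refine ⟨a.2, a₀.2, ?_⟩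
      have : (G.induce h).Reachable a a₀ := by
        rw [← SimpleGraph.ConnectedComponent.eq]
        rw [ha, ha₀]
      convert this using 2 <;> simp
    · intro a _ b _ hab
      exact Subtype.ext hab
    · intro x hx
      simp only [Finset.mem_filter, Finset.mem_univ, true_and] at hx
      obtain ⟨hxh, hvh, hr⟩ := hx
      refine ⟨⟨x, hxh⟩, ?_, rfl⟩
      simp only [Finset.mem_filter, Finset.mem_univ, true_and]
      rw [← ha₀, SimpleGraph.ConnectedComponent.eq]
      convert hr using 2 <;> simp
    · intro a _
      rfl
  rw [hbij]
  exact hc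

end TreeCover
namespace TreeCover
open SimpleGraph Finset
attribute [local instance] Classical.propDecidable

variable {V : Type*} [Fintype V]

/-- From a fractional cover we get an integral cover at cost a factor `d`. -/
lemma cover_of_fractional {G : SimpleGraph V} (hG : G.IsTree) (r : V) (d : ℕ)
    (hd : 1 ≤ d) (H : Finset (Set V))
    (hcomp : ∀ h ∈ H, Nat.card (G.induce h).ConnectedComponent ≤ d)
    (x : V → ℝ) (hx0 : ∀ v, 0 ≤ x v)
    (hxc : ∀ h ∈ H, 1 ≤ ∑ v ∈ Finset.univ.filter (· ∈ h), x v) :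
    ∃ C : Finset V, (C.card : ℝ) ≤ d * ∑ v, x v ∧ ∀ h ∈ H, ∃ c ∈ C, c ∈ h := by
  obtain ⟨C, hCcard, hCcov⟩ := greedy hG r d hd
    ((Finset.univ.filter (fun v => x v ≠ 0)).card) x le_rfl hx0
  refine ⟨C, hCcard, ?_⟩
  intro h hh
  obtain ⟨v, hv, hheavy⟩ := exists_heavy_comp d hd h (hcomp h hh) x hx0 (hxc h hh)
  obtain ⟨c, hcC, hcS⟩ := hCcov (comp G h v) ⟨v, mem_comp_self hv⟩
    (comp_pathClosed hG h v) hheavy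
  exact ⟨c, hcC, comp_subset hcS⟩

/-- The set of "tops" (gates of components) of a member. -/
noncomputable def tops {G : SimpleGraph V} (hG : G.IsTree) (r : V) (h : Set V) :
    Finset V :=
  Finset.univ.filter (fun u => ∃ v ∈ h, u = gate hG r (comp G h v))

lemma card_tops_le {G : SimpleGraph V} (hG : G.IsTree) (r : V) (d : ℕ) (h : Set V)
    (hcc : Nat.card (G.induce h).ConnectedComponent ≤ d) :
    (tops hG r h).card ≤ d := by
  haveI : Fintype ↥h := Fintype.ofFinite _
  haveI : Fintype (G.induce h).ConnectedComponent := Fintype.ofFinite _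
  have hsub : tops hG r h ⊆ Finset.univ.image
      (fun c : (G.induce h).ConnectedComponent =>
        gate hG r (comp G h c.exists_rep.choose.val)) := by
    intro u hu
    simp only [tops, Finset.mem_filter, Finset.mem_univ, true_and] at hu
    obtain ⟨v, hv, rfl⟩ := hu
    rw [Finset.mem_image]
    set c : (G.induce h).ConnectedComponent := (G.induce h).connectedComponentMk ⟨v, hv⟩
      with hc
    refine ⟨c, Finset.mem_univ _, ?_⟩
    have hrep := c.exists_rep.choose_spec
    have hreach : (G.induce h).Reachable c.exists_rep.choose ⟨v, hv⟩ := by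
      rw [← SimpleGraph.ConnectedComponent.eq]
      exact hrep.trans rfl
    -- the two component sets coincide
    have hcompeq : comp G h c.exists_rep.choose.val = comp G h v := by
      ext y
      constructor
      · rintro ⟨hy, hv2, hr⟩
        refine ⟨hy, hv, ?_⟩
        refine (Reachable.trans ?_ hreach)
        convert hr using 2 <;> simp
      · rintro ⟨hy, hv2, hr⟩
        refine ⟨hy, c.exists_rep.choose.2, ?_⟩
        refine Reachable.trans ?_ hreach.symm
        convert hr using 2 <;> simp
    rw [hcompeq]
  calc (tops hG r h).card ≤ _ := Finset.card_le_card hsub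
    _ ≤ Fintype.card (G.induce h).ConnectedComponent :=
        le_trans (Finset.card_image_le) (by simp)
    _ ≤ d := by rw [← Nat.card_eq_fintype_card]; exact hcc

/-- Key structural lemma: any family of members with a common vertex contains a
member one of whose tops lies in all of them. -/
lemma exists_common_top {G : SimpleGraph V} (hG : G.IsTree) (r : V) {p : ℕ}
    (hp : 1 ≤ p) (f : Fin p → Set V) {v : V} (hv : ∀ i, v ∈ f i) :
    ∃ u, (∃ i, u ∈ tops hG r (f i)) ∧ ∀ j, u ∈ f j := by
  haveI : Nonempty (Fin p) := ⟨⟨0, hp⟩⟩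
  set t : Fin p → V := fun i => gate hG r (comp G (f i) v) with ht
  have hspec : ∀ i, t i ∈ comp G (f i) v ∧ t i ∈ (upath hG r v).support := by
    intro i
    have h1 := gate_spec hG r (⟨v, mem_comp_self (hv i)⟩ : (comp G (f i) v).Nonempty)
      (comp_pathClosed hG (f i) v)
    exact ⟨h1.1, h1.2 v (mem_comp_self (hv i))⟩
  obtain ⟨i, _, himax⟩ := Finset.exists_max_image Finset.univ (fun i => depth hG r (t i))
    Finset.univ_nonempty
  refine ⟨t i, ⟨i, ?_⟩, ?_⟩
  · simp only [tops, Finset.mem_filter, Finset.mem_univ, true_and]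
    exact ⟨v, hv i, rfl⟩
  · intro j
    have hsuf : t i ∈ (upath hG (t j) v).support :=
      mem_suffix hG (hspec i).2 (hspec j).2 (himax j (Finset.mem_univ j))
    have : t i ∈ comp G (f j) v :=
      comp_pathClosed hG (f j) v (t j) (hspec j).1 v (mem_comp_self (hv j)) (t i) hsuf
    exact comp_subset this

/-- The counting bound: any fractional matching has total weight at most
`(p·d)^(1/(p-1))`. -/
lemma counting {G : SimpleGraph V} (hG : G.IsTree) (r : V) (p d : ℕ)
    (hp : 2 ≤ p) (hd : 1 ≤ d) (H : Finset (Set V))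
    (hcomp : ∀ h ∈ H, Nat.card (G.induce h).ConnectedComponent ≤ d)
    (hcard : p ≤ H.card) (hprop : VertexPQProperty H p p)
    (y : Set V → ℝ) (hy0 : ∀ h ∈ H, 0 ≤ y h)
    (hcon : ∀ v : V, ∑ h ∈ H.filter (fun h => v ∈ h), y h ≤ 1) :
    ∑ h ∈ H, y h ≤ ((p : ℝ) * d) ^ (1 / ((p:ℝ) - 1)) := by
  set t := ∑ h ∈ H, y h with hts
  have ht0 : 0 ≤ t := Finset.sum_nonneg fun h hh => hy0 h hh
  set piF := Fintype.piFinset (fun _ : Fin p => (H : Finset (Set V))) with hpiF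
  set Z : V → ℝ := fun u => ∑ h ∈ H, (if u ∈ tops hG r h ∧ u ∈ h then y h else 0) with hZ
  set X : V → ℝ := fun u => ∑ h ∈ H, (if u ∈ h then y h else 0) with hX
  have hX1 : ∀ u, X u ≤ 1 := by
    intro u
    rw [hX]
    dsimp only
    rw [← Finset.sum_filter]
    exact hcon u
  have hX0 : ∀ u, 0 ≤ X u := by
    intro u
    refine Finset.sum_nonneg fun h hh => ?_
    split
    · exact hy0 h hh
    · exact le_rfl
  have hZ0 : ∀ u, 0 ≤ Z u := by
    intro u
    refine Finset.sum_nonneg fun h hh => ?_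
    split
    · exact hy0 h hh
    · exact le_rfl
  have hcommon : ∀ f : Fin p → Set V, (∀ i, f i ∈ H) → ∃ v : V, ∀ i, v ∈ f i := by
    intro f hf
    have himg : Finset.image f Finset.univ ⊆ H := by
      intro s hs
      rw [Finset.mem_image] at hs
      obtain ⟨i, _, rfl⟩ := hs
      exact hf i
    have hle : (Finset.image f Finset.univ).card ≤ p :=
      le_trans Finset.card_image_le (by simp)
    obtain ⟨S, hS1, hS2, hS3⟩ := Finset.exists_subsuperset_card_eq himg hle hcard
    obtain ⟨T, hTS, hTcard, hTne⟩ := hprop S hS2 hS3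
    have hTeq : T = S := Finset.eq_of_subset_of_card_le hTS (by rw [hTcard, hS3])
    subst hTeq
    obtain ⟨v, hv⟩ := hTne
    refine ⟨v, fun i => ?_⟩
    have hfi : f i ∈ T := hS1 (Finset.mem_image.mpr ⟨i, Finset.mem_univ i, rfl⟩)
    exact Set.mem_iInter₂.mp hv (f i) hfi
  have main : t ^ p ≤ (p : ℝ) * ((d : ℝ) * t) := by
    have e1 : t ^ p = ∑ f ∈ piF, ∏ i : Fin p, y (f i) := by
      rw [← Finset.prod_univ_sum]
      rw [Finset.prod_const, Finset.card_univ, Fintype.card_fin]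
    have e2 : ∀ f ∈ piF, ∏ i : Fin p, y (f i) ≤
        ∑ iu : Fin p × V, (if iu.2 ∈ tops hG r (f iu.1) ∧ ∀ j, iu.2 ∈ f j
          then ∏ j : Fin p, y (f j) else 0) := by
      intro f hf
      have hfH : ∀ i, f i ∈ H := by
        intro i
        have := Fintype.mem_piFinset.mp hf
        exact this i
      obtain ⟨v, hv⟩ := hcommon f hfH
      obtain ⟨u, ⟨i, hui⟩, hall⟩ := exists_common_top hG r (by omega) f hv
      have hprodnn : 0 ≤ ∏ j : Fin p, y (f j) :=
        Finset.prod_nonneg fun j _ => hy0 _ (hfH j)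
      have hnn : ∀ iu : Fin p × V, iu ∈ Finset.univ →
          (0:ℝ) ≤ if iu.2 ∈ tops hG r (f iu.1) ∧ ∀ j, iu.2 ∈ f j
            then ∏ j : Fin p, y (f j) else 0 := by
        intro iu _
        split
        · exact hprodnn
        · exact le_rfl
      have hle := Finset.single_le_sum
        (f := fun iu : Fin p × V => if iu.2 ∈ tops hG r (f iu.1) ∧ ∀ j, iu.2 ∈ f j
          then ∏ j : Fin p, y (f j) else 0)
        hnn (Finset.mem_univ (⟨i, u⟩ : Fin p × V))
      dsimp only at hle
      rw [if_pos ⟨hui, hall⟩] at hle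
      exact hle
    have e4 : ∀ (i : Fin p) (u : V), (∑ f ∈ piF,
        if u ∈ tops hG r (f i) ∧ ∀ j, u ∈ f j then ∏ j : Fin p, y (f j) else 0)
        ≤ Z u := by
      intro i u
      have hrw : ∀ f ∈ piF,
          (if u ∈ tops hG r (f i) ∧ ∀ j, u ∈ f j then ∏ j : Fin p, y (f j) else 0)
          = ∏ j : Fin p, (if j = i
              then (if u ∈ tops hG r (f j) ∧ u ∈ f j then y (f j) else 0)
              else (if u ∈ f j then y (f j) else 0)) := by
        intro f _
        by_cases hcond : u ∈ tops hG r (f i) ∧ ∀ j, u ∈ f j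
        · rw [if_pos hcond]
          refine Finset.prod_congr rfl fun j _ => ?_
          by_cases hji : j = i
          · subst hji
            rw [if_pos rfl, if_pos ⟨hcond.1, hcond.2 j⟩]
          · rw [if_neg hji, if_pos (hcond.2 j)]
        · rw [if_neg hcond]
          rcases not_and_or.mp hcond with hnt | hnall
          · refine (Finset.prod_eq_zero (Finset.mem_univ i) ?_).symm
            rw [if_pos rfl, if_neg]
            intro hcon2
            exact hnt hcon2.1
          · push_neg at hnall
            obtain ⟨j, hj⟩ := hnall
            refine (Finset.prod_eq_zero (Finset.mem_univ j) ?_).symm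
            by_cases hji : j = i
            · rw [if_pos hji, if_neg]
              intro hcon2
              exact hj hcon2.2
            · rw [if_neg hji, if_neg hj]
      rw [Finset.sum_congr rfl hrw]
      have hfact := Finset.prod_univ_sum (t := fun _ : Fin p => H)
        (f := fun (j : Fin p) (h : Set V) => if j = i
          then (if u ∈ tops hG r h ∧ u ∈ h then y h else 0)
          else (if u ∈ h then y h else 0))
      rw [hpiF, ← hfact]
      have hFi : (∑ h ∈ H, if u ∈ tops hG r h ∧ u ∈ h then y h else 0) = Z u := rfl
      have hsplit := Finset.mul_prod_erase Finset.univ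
        (fun j : Fin p => ∑ h ∈ H, (if j = i
            then (if u ∈ tops hG r h ∧ u ∈ h then y h else 0)
            else (if u ∈ h then y h else 0))) (Finset.mem_univ i)
      rw [← hsplit]
      have h1 : (∑ h ∈ H, if i = i
          then (if u ∈ tops hG r h ∧ u ∈ h then y h else 0)
          else (if u ∈ h then y h else 0)) = Z u := by
        simp only [if_pos rfl]
        rfl
      rw [h1]
      have h2 : (∏ j ∈ Finset.univ.erase i, ∑ h ∈ H, (if j = i
          then (if u ∈ tops hG r h ∧ u ∈ h then y h else 0)
          else (if u ∈ h then y h else 0))) ≤ 1 := by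
        refine Finset.prod_le_one (fun j hj => ?_) (fun j hj => ?_)
        · simp only [if_neg (Finset.mem_erase.mp hj).1]
          exact hX0 u
        · simp only [if_neg (Finset.mem_erase.mp hj).1]
          exact hX1 u
      have h3 : (0:ℝ) ≤ Z u := hZ0 u
      calc Z u * _ ≤ Z u * 1 := by
            refine mul_le_mul_of_nonneg_left h2 h3
        _ = Z u := mul_one _
    have e6 : ∑ u : V, Z u ≤ (d : ℝ) * t := by
      rw [hZ]
      dsimp only
      rw [Finset.sum_comm]
      have hinner : ∀ h ∈ H, (∑ u : V, if u ∈ tops hG r h ∧ u ∈ h then y h else 0)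
          ≤ y h * d := by
        intro h hh
        rw [← Finset.sum_filter]
        rw [Finset.sum_const, nsmul_eq_mul]
        have hcard2 : (Finset.univ.filter
            (fun u => u ∈ tops hG r h ∧ u ∈ h)).card ≤ d := by
          refine le_trans (Finset.card_le_card ?_) (card_tops_le hG r d h (hcomp h hh))
          intro u hu
          exact ((Finset.mem_filter.mp hu).2).1
        calc ((Finset.univ.filter (fun u => u ∈ tops hG r h ∧ u ∈ h)).card : ℝ) * y h
            ≤ (d : ℝ) * y h :=
              mul_le_mul_of_nonneg_right (by exact_mod_cast hcard2) (hy0 h hh)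
          _ = y h * d := mul_comm _ _
      calc ∑ h ∈ H, (∑ u : V, if u ∈ tops hG r h ∧ u ∈ h then y h else 0)
          ≤ ∑ h ∈ H, y h * d := Finset.sum_le_sum hinner
        _ = (d : ℝ) * t := by rw [hts, ← Finset.sum_mul, mul_comm]
    calc t ^ p = ∑ f ∈ piF, ∏ i : Fin p, y (f i) := e1
      _ ≤ ∑ f ∈ piF, ∑ iu : Fin p × V,
            (if iu.2 ∈ tops hG r (f iu.1) ∧ ∀ j, iu.2 ∈ f j
              then ∏ j : Fin p, y (f j) else 0) := Finset.sum_le_sum e2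
      _ = ∑ iu : Fin p × V, ∑ f ∈ piF,
            (if iu.2 ∈ tops hG r (f iu.1) ∧ ∀ j, iu.2 ∈ f j
              then ∏ j : Fin p, y (f j) else 0) := by rw [Finset.sum_comm]
      _ ≤ ∑ iu : Fin p × V, Z iu.2 := by
            refine Finset.sum_le_sum fun iu _ => ?_
            exact e4 iu.1 iu.2
      _ = ∑ i : Fin p, ∑ u : V, Z u := by rw [Fintype.sum_prod_type]
      _ = (p : ℝ) * ∑ u : V, Z u := by
            rw [Finset.sum_const, Finset.card_univ, Fintype.card_fin, nsmul_eq_mul]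
      _ ≤ (p : ℝ) * ((d : ℝ) * t) := by
            refine mul_le_mul_of_nonneg_left e6 (by positivity)
  -- conclude
  have hexp : (0:ℝ) < (p:ℝ) - 1 := by
    have : (2:ℝ) ≤ (p:ℝ) := by exact_mod_cast hp
    linarith
  rcases eq_or_lt_of_le ht0 with heq | hpos
  · rw [← heq]
    exact Real.rpow_nonneg (by positivity) _
  · have h1 : t ^ (p-1) * t ≤ ((p : ℝ) * d) * t := by
      have : t ^ (p-1) * t = t ^ p := by
        rw [← pow_succ]
        congr 1
        omega
      rw [this]
      calc t ^ p ≤ (p:ℝ) * ((d:ℝ) * t) := main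
        _ = ((p:ℝ) * d) * t := by ring
    have h2 : t ^ (p-1) ≤ (p : ℝ) * d := le_of_mul_le_mul_right h1 hpos
    have hcast : ((p - 1 : ℕ) : ℝ) = (p:ℝ) - 1 := by
      have : 1 ≤ p := by omega
      push_cast [Nat.cast_sub this]
      ring
    have key : t ^ ((p:ℝ) - 1) ≤ (p:ℝ) * d := by
      rw [← hcast, Real.rpow_natCast]
      exact h2
    have hfinal : t = (t ^ ((p:ℝ) - 1)) ^ (1 / ((p:ℝ) - 1)) := by
      rw [← Real.rpow_mul ht0, mul_one_div_cancel (ne_of_gt hexp), Real.rpow_one]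
    rw [hfinal]
    exact Real.rpow_le_rpow (Real.rpow_nonneg ht0 _) key (by positivity)

end TreeCover
namespace TreeCover
open SimpleGraph Finset
attribute [local instance] Classical.propDecidable

theorem farkas' {ι κ : Type*} [Fintype ι] [Fintype κ] (g : κ → ι → ℝ) (b : ι → ℝ) :
    (∃ lam : κ → ℝ, (∀ k, 0 ≤ lam k) ∧ b = ∑ k, lam k • g k) ∨
    (∃ y : ι → ℝ, (∀ k, 0 ≤ dot (g k) y) ∧ dot b y < 0) := by
  obtain e := Fintype.equivFin κ
  rcases farkas (Fintype.card κ) (fun i => g (e.symm i)) b with ⟨lam, h0, hb⟩ | ⟨y, h1, h2⟩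
  · refine Or.inl ⟨fun k => lam (e k), fun k => h0 _, ?_⟩
    rw [hb]
    exact (Fintype.sum_equiv e _ _ (fun k => by simp)).symm
  · refine Or.inr ⟨y, fun k => ?_, h2⟩
    have := h1 (e k)
    simpa using this

theorem tree_cover_main {V : Type*} [Fintype V]
    (G : SimpleGraph V) (hG : G.IsTree)
    (p d : ℕ) (hp : 2 ≤ p) (hd : 1 ≤ d)
    (H : Finset (Set V)) (hne : ∀ h ∈ H, h.Nonempty)
    (hcomp : ∀ h ∈ H, Nat.card (G.induce h).ConnectedComponent ≤ d)
    (hcard : p ≤ H.card)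
    (hprop : VertexPQProperty H p p) :
    (vertexCoverNum H : ℝ) <
      (p : ℝ) ^ (1 / ((p : ℝ) - 1)) * (d : ℝ) ^ ((p : ℝ) / ((p : ℝ) - 1)) + d := by
  haveI : Nonempty V := hG.isConnected.nonempty
  have r : V := Classical.arbitrary V
  have hdpos : (0:ℝ) < d := by positivity
  have hppos : (0:ℝ) < p := by
    have : (2:ℝ) ≤ (p:ℝ) := by exact_mod_cast hp
    linarith
  have hexp : (0:ℝ) < (p:ℝ) - 1 := by
    have : (2:ℝ) ≤ (p:ℝ) := by exact_mod_cast hp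
    linarith
  set t0 : ℝ := ((p:ℝ) * d) ^ (1 / ((p:ℝ) - 1)) with ht0def
  -- the key identity for the right-hand side
  have hrhs : (p : ℝ) ^ (1 / ((p : ℝ) - 1)) * (d : ℝ) ^ ((p : ℝ) / ((p : ℝ) - 1))
      = (d : ℝ) * t0 := by
    have hfrac : (p:ℝ) / ((p:ℝ) - 1) = 1 + 1 / ((p:ℝ) - 1) := by
      field_simp
      ring
    rw [hfrac, Real.rpow_add hdpos, Real.rpow_one, ht0def,
      Real.mul_rpow (le_of_lt hppos) (le_of_lt hdpos)]
    ring
  -- it suffices to find a cover of size at most d * t0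
  suffices hsuff : ∃ C : Finset V, (C.card : ℝ) ≤ (d:ℝ) * t0 ∧ ∀ h ∈ H, ∃ c ∈ C, c ∈ h by
    obtain ⟨C, hC1, hC2⟩ := hsuff
    have hτ : vertexCoverNum H ≤ C.card := Nat.sInf_le ⟨C, rfl, hC2⟩
    have hτ' : (vertexCoverNum H : ℝ) ≤ C.card := by exact_mod_cast hτ
    rw [hrhs]
    linarith
  -- Farkas alternative for the covering LP
  rcases farkas' (ι := ({h // h ∈ H} ⊕ Unit)) (κ := (V ⊕ ({h // h ∈ H} ⊕ Unit)))
      (Sum.elim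
        (fun v => Sum.elim
          (fun h : {h // h ∈ H} => if v ∈ (h : Set V) then (-1:ℝ) else 0)
          (fun _ => (1:ℝ)))
        (Sum.elim
          (fun h' : {h // h ∈ H} => Sum.elim
            (fun h : {h // h ∈ H} => if h' = h then (1:ℝ) else 0) (fun _ => (0:ℝ)))
          (fun _ => Sum.elim (fun _ : {h // h ∈ H} => (0:ℝ)) (fun _ => (1:ℝ)))))
      (Sum.elim (fun _ : {h // h ∈ H} => (-1:ℝ)) (fun _ => t0))
    with ⟨lam, hlam0, hb⟩ | ⟨yv, hy1, hy2⟩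
  · -- primal feasible: extract a fractional cover of weight at most t0
    set x : V → ℝ := fun v => lam (Sum.inl v) with hxdef
    have hx0 : ∀ v, 0 ≤ x v := fun v => hlam0 _
    have hcov : ∀ h₀ ∈ H, 1 ≤ ∑ v ∈ Finset.univ.filter (· ∈ h₀), x v := by
      intro h₀ hh
      have h1 := congrFun hb (Sum.inl (⟨h₀, hh⟩ : {h // h ∈ H}))
      simp only [Sum.elim_inl, Sum.elim_inr, Finset.sum_apply, Pi.smul_apply,
        smul_eq_mul, Fintype.sum_sum_type, mul_ite, mul_one, mul_zero, mul_neg,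
        Finset.sum_const, Finset.card_univ, Fintype.card_unit, one_smul,
        Finset.sum_ite_eq', Finset.mem_univ, if_true, smul_zero, add_zero] at h1
      rw [← Finset.sum_filter] at h1
      rw [Finset.sum_neg_distrib] at h1
      have := hlam0 (Sum.inr (Sum.inl (⟨h₀, hh⟩ : {h // h ∈ H})))
      rw [hxdef]
      dsimp only
      linarith
    have htot : ∑ v, x v ≤ t0 := by
      have h1 := congrFun hb (Sum.inr ())
      simp only [Sum.elim_inl, Sum.elim_inr, Finset.sum_apply, Pi.smul_apply,
        smul_eq_mul, Fintype.sum_sum_type, mul_ite, mul_one, mul_zero,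
        Finset.sum_const, Finset.card_univ, Fintype.card_unit, one_smul,
        smul_zero, add_zero, Finset.sum_const_zero, zero_add, Fintype.sum_unique] at h1
      have := hlam0 (Sum.inr (Sum.inr ()))
      rw [hxdef]
      dsimp only
      linarith
    obtain ⟨C, hC1, hC2⟩ := cover_of_fractional hG r d hd H hcomp x hx0 hcov
    refine ⟨C, le_trans hC1 ?_, hC2⟩
    exact mul_le_mul_of_nonneg_left htot (le_of_lt hdpos)
  · -- dual unbounded: contradiction with the counting lemma
    exfalso
    set μ : ℝ := yv (Sum.inr ()) with hμdef
    have hμ0 : 0 ≤ μ := by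
      have := hy1 (Sum.inr (Sum.inr ()))
      simpa [dot, Fintype.sum_sum_type] using this
    have hyh0 : ∀ h : {h // h ∈ H}, 0 ≤ yv (Sum.inl h) := by
      intro h
      have := hy1 (Sum.inr (Sum.inl h))
      simpa [dot, Fintype.sum_sum_type, ite_mul, one_mul, zero_mul,
        Finset.sum_ite_eq] using this
    have hvcon : ∀ v : V,
        ∑ h' : {h // h ∈ H}, (if v ∈ (h' : Set V) then yv (Sum.inl h') else 0) ≤ μ := by
      intro v
      have := hy1 (Sum.inl v)
      simp only [dot, Sum.elim_inl, Sum.elim_inr, Fintype.sum_sum_type, ite_mul,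
        one_mul, zero_mul, neg_mul, Finset.sum_const, Finset.card_univ,
        Fintype.card_unit, one_smul, Finset.sum_const_zero, zero_add, Fintype.sum_unique] at this
      have hrw : ∑ h' : {h // h ∈ H},
          (if v ∈ (h' : Set V) then -yv (Sum.inl h') else 0)
          = - ∑ h' : {h // h ∈ H}, (if v ∈ (h' : Set V) then yv (Sum.inl h') else 0) := by
        rw [← Finset.sum_neg_distrib]
        refine Finset.sum_congr rfl fun h' _ => ?_
        split <;> simp
      rw [hrw] at this
      linarith
    have hytot : t0 * μ < ∑ h' : {h // h ∈ H}, yv (Sum.inl h') := by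
      simp only [dot, Sum.elim_inl, Sum.elim_inr, Fintype.sum_sum_type, neg_mul,
        one_mul, Finset.sum_neg_distrib, Finset.sum_const, Finset.card_univ,
        Fintype.card_unit, one_smul, Fintype.sum_unique] at hy2
      linarith
    -- convert to a weight function on `Set V`
    set Y : Set V → ℝ := fun s => if hs : s ∈ H then yv (Sum.inl ⟨s, hs⟩) else 0
      with hYdef
    have hYsub : ∀ (f : Set V → ℝ), ∑ h ∈ H, f h = ∑ h' : {h // h ∈ H}, f h' := by
      intro f
      exact Finset.sum_subtype H (fun x => Iff.rfl) f
    have hYval : ∀ h' : {h // h ∈ H}, Y h' = yv (Sum.inl h') := by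
      intro h'
      rw [hYdef]
      dsimp only
      rw [dif_pos h'.2]
    have convB : ∑ h ∈ H, Y h = ∑ h' : {h // h ∈ H}, yv (Sum.inl h') := by
      rw [hYsub Y]
      exact Finset.sum_congr rfl fun h' _ => hYval h'
    have convA : ∀ v : V, ∑ h ∈ H.filter (fun h => v ∈ h), Y h
        = ∑ h' : {h // h ∈ H}, (if v ∈ (h' : Set V) then yv (Sum.inl h') else 0) := by
      intro v
      rw [Finset.sum_filter, hYsub (fun h => if v ∈ h then Y h else 0)]
      refine Finset.sum_congr rfl fun h' _ => ?_
      rw [hYval h']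
    have hY0 : ∀ h ∈ H, 0 ≤ Y h := by
      intro h hh
      have := hyh0 ⟨h, hh⟩
      rw [hYdef]
      dsimp only
      rw [dif_pos hh]
      exact this
    rcases eq_or_lt_of_le hμ0 with hμeq | hμpos
    · -- μ = 0 : all weights vanish, contradiction
      have hzero : ∀ h ∈ H, Y h = 0 := by
        intro h hh
        obtain ⟨v, hv⟩ := hne h hh
        have hle := hvcon v
        rw [← convA v] at hle
        rw [← hμeq] at hle
        have hmem : h ∈ H.filter (fun h => v ∈ h) := Finset.mem_filter.mpr ⟨hh, hv⟩
        have := (Finset.sum_eq_zero_iff_of_nonneg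
          (fun h₂ hh₂ => hY0 h₂ (Finset.mem_filter.mp hh₂).1)).mp
          (le_antisymm hle (Finset.sum_nonneg fun h₂ hh₂ =>
            hY0 h₂ (Finset.mem_filter.mp hh₂).1)) h hmem
        exact this
      have : ∑ h ∈ H, Y h = 0 := Finset.sum_eq_zero hzero
      rw [convB] at this
      rw [← hμeq] at hytot
      rw [mul_zero] at hytot
      linarith
    · -- μ > 0 : rescale and contradict the counting bound
      have hcount := counting hG r p d hp hd H hcomp hcard hprop
        (fun s => Y s / μ)
        (fun h hh => div_nonneg (hY0 h hh) (le_of_lt hμpos))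
        (fun v => by
          rw [← Finset.sum_div]
          rw [div_le_one hμpos]
          rw [convA v]
          exact hvcon v)
      rw [← Finset.sum_div, div_le_iff₀ hμpos] at hcount
      rw [convB] at hcount
      rw [← ht0def] at hcount
      linarith

end TreeCover

theorem tree_cover_of_pp_property {V : Type*} [Fintype V]
    (G : SimpleGraph V) (hG : G.IsTree)
    (p d : ℕ) (hp : 2 ≤ p) (hd : 1 ≤ d)
    (H : Finset (Set V)) (hne : ∀ h ∈ H, h.Nonempty)
    (hcomp : ∀ h ∈ H, Nat.card (G.induce h).ConnectedComponent ≤ d)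
    (hcard : p ≤ H.card)
    (hprop : VertexPQProperty H p p) :
    (vertexCoverNum H : ℝ) <
      (p : ℝ) ^ (1 / ((p : ℝ) - 1)) * (d : ℝ) ^ ((p : ℝ) / ((p : ℝ) - 1)) + d :=
  TreeCover.tree_cover_main G hG p d hp hd H hne hcomp hcard hprop
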